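/- arXiv:0806.2514 — 2 statements merged into one kernel-verified Lean document; each statement's English description precedes it below -/
import Mathlib

section
/- Let a_1,...,a_n and a_1*,...,a_n* be 2n Grassmann generators and let M be an n×n matrix over a field K of characteristic zero. Set f = Σ_{i,j} M_{ij} a_i a_j*. Then the iterated Berezin integral ∫ exp(f) da_n* da_n ⋯ da_1* da_1 equals det(M). -/
set_option synthInstance.maxHeartbeats 1000000
set_option maxHeartbeats 1000000
set_option linter.unusedSectionVars false


noncomputable section

/-- The Grassmann algebra on generators indexed by `I` (the exterior algebra of `K^I`). -/
abbrev Gr (K : Type) [Field K] (I : Type) : Type := ExteriorAlgebra K (I → K)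

/-- The Grassmann generator with index `x`. -/
def gen (K : Type) [Field K] (I : Type) [DecidableEq I] (x : I) : Gr K I :=
  ExteriorAlgebra.ι K (Pi.single x 1)

/-- The subalgebra of elements not involving the generator `a_t`. -/
def notInvolving (K : Type) [Field K] (I : Type) [DecidableEq I] (t : I) :
    Subalgebra K (Gr K I) :=
  Algebra.adjoin K {y | ∃ u : I, u ≠ t ∧ y = gen K I u}

/-- `B` is a family of Berezin integrals: `B t` extracts the coefficient `h` from the
(unique) decomposition `f = g + h * a_t` with `g, h` not involving `a_t`.  This encodes
`∫ da_t = 0`, `∫ a_t da_t = 1` and the module property `∫ g h da_t = g ∫ h da_t` for `g`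
not involving `a_t`. -/
def IsBerezinFamily (K : Type) [Field K] (I : Type) [DecidableEq I]
    (B : I → (Gr K I →ₗ[K] Gr K I)) : Prop :=
  ∀ t : I, ∀ g h : Gr K I, g ∈ notInvolving K I t → h ∈ notInvolving K I t →
    B t (g + h * gen K I t) = h

/-- The exponential, defined by the Taylor series truncated at `m` terms (for nilpotent
arguments and `m` large enough this is the full, terminating, series). -/
def gexp (K : Type) [Field K] (I : Type) (m : ℕ) (x : Gr K I) : Gr K I :=
  ∑ k ∈ Finset.range m, ((k.factorial : K))⁻¹ • x ^ k

namespace BerezinAux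

open ExteriorAlgebra

/-! ### Generic ring lemmas -/

lemma pow_zero_of_le {A : Type*} [Ring A] {s : A} {q m : ℕ} (h : q ≤ m) (hs : s ^ q = 0) :
    s ^ m = 0 := by
  rw [← Nat.sub_add_cancel h, pow_add, hs, mul_zero]

lemma pow_add_of_sq_zero {A : Type*} [Ring A] {x s : A} (hc : Commute x s) (hx : x * x = 0) :
    ∀ k : ℕ, (x + s) ^ (k + 1) = s ^ (k + 1) + (k + 1) • (x * s ^ k)
  | 0 => by simp [add_comm]
  | (k + 1) => by
    rw [pow_succ' (x + s) (k + 1), pow_add_of_sq_zero hc hx k]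
    have h1 : x * ((k + 1) • (x * s ^ k)) = 0 := by
      rw [mul_smul_comm, ← mul_assoc, hx, zero_mul, smul_zero]
    have h2 : s * ((k + 1) • (x * s ^ k)) = (k + 1) • (x * s ^ (k + 1)) := by
      rw [mul_smul_comm, ← mul_assoc, ← hc.eq, mul_assoc, ← pow_succ']
    rw [add_mul, mul_add, mul_add, h1, h2, add_zero, ← pow_succ']
    generalize x * s ^ (k + 1) = y
    generalize s ^ (k + 1 + 1) = z
    rw [succ_nsmul y (k + 1), add_comm y (z + (k + 1) • y), add_assoc]

lemma mul_dec {A : Type*} [Ring A] (g1 h1 g2 h2 G2 H2 a : A) (e1 : a * g2 = G2 * a)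
    (e2 : a * h2 = H2 * a) (ha : a * a = 0) :
    (g1 + h1 * a) * (g2 + h2 * a) = g1 * g2 + (g1 * h2 + h1 * G2) * a := by
  have k1 : h1 * a * g2 = h1 * G2 * a := by rw [mul_assoc, e1, ← mul_assoc]
  have k2 : h1 * a * (h2 * a) = 0 := by
    rw [mul_assoc h1 a, ← mul_assoc a, e2, mul_assoc H2, ha, mul_zero, mul_zero]
  rw [mul_add, add_mul, add_mul, k1, k2, add_zero]
  noncomm_ring


lemma list_sum_pow_eq_zero {A : Type*} [Ring A] :
    ∀ (l : List A), (∀ x ∈ l, ∀ y ∈ l, Commute x y) → (∀ x ∈ l, x * x = 0) →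
      l.sum ^ (l.length + 1) = 0
  | [], _, _ => by simp
  | x :: l, hc, hs => by
    have hxl : Commute x l.sum := Commute.list_sum_right _ _ fun y hy =>
      hc x (by simp) y (by simp [hy])
    have hx : x * x = 0 := hs x (by simp)
    have ih : l.sum ^ (l.length + 1) = 0 :=
      list_sum_pow_eq_zero l (fun a ha b hb => hc a (by simp [ha]) b (by simp [hb]))
        (fun a ha => hs a (by simp [ha]))
    have h2 : l.sum ^ (l.length + 1 + 1) = 0 := by rw [pow_succ, ih, zero_mul]
    rw [List.sum_cons, List.length_cons, pow_add_of_sq_zero hxl hx, h2, ih, mul_zero,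
      smul_zero, add_zero]

section Gexp

variable {K : Type} [Field K] [CharZero K] {I : Type}

lemma gexp_zero {m : ℕ} (hm : 1 ≤ m) : gexp K I m 0 = 1 := by
  obtain ⟨m', rfl⟩ : ∃ m', m = m' + 1 := ⟨m - 1, (Nat.succ_pred_eq_of_pos hm).symm⟩
  unfold gexp
  rw [Finset.sum_range_succ']
  simp [zero_pow]

lemma gexp_add_of_sq_zero {x s : Gr K I} (hc : Commute x s) (hx : x * x = 0) {q m : ℕ}
    (hs : s ^ q = 0) (hm : q + 1 ≤ m) :
    gexp K I m (x + s) = (1 + x) * gexp K I m s := by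
  obtain ⟨m', rfl⟩ : ∃ m', m = m' + 1 :=
    ⟨m - 1, (Nat.succ_pred_eq_of_pos (le_trans (Nat.le_add_left 1 q) hm)).symm⟩
  have hsm : s ^ m' = 0 := pow_zero_of_le (by omega) hs
  unfold gexp
  rw [Finset.sum_range_succ' (fun k => ((k.factorial : K))⁻¹ • (x + s) ^ k) m',
    Finset.sum_range_succ' (fun k => ((k.factorial : K))⁻¹ • s ^ k) m']
  have key : ∀ k : ℕ, (((k + 1).factorial : K))⁻¹ • (x + s) ^ (k + 1) =
      (((k + 1).factorial : K))⁻¹ • s ^ (k + 1) + ((k.factorial : K))⁻¹ • (x * s ^ k) := by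
    intro k
    rw [pow_add_of_sq_zero hc hx k, smul_add]
    congr 1
    rw [← Nat.cast_smul_eq_nsmul K (k + 1) (x * s ^ k), smul_smul]
    congr 1
    have h1 : ((k + 1).factorial : K) = (k + 1) * (k.factorial : K) := by
      rw [Nat.factorial_succ]; push_cast; ring
    have h2 : ((k : K) + 1) ≠ 0 := by
      have := Nat.cast_add_one_ne_zero (R := K) k; exact this
    have h3 : ((k.factorial : K)) ≠ 0 := Nat.cast_ne_zero.mpr (Nat.factorial_ne_zero k)
    rw [h1]
    push_cast
    field_simp
  simp only [key]
  rw [Finset.sum_add_distrib]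
  rw [add_mul, one_mul]
  have hx0 : ((Nat.factorial 0 : K))⁻¹ • (x + s) ^ 0 = ((Nat.factorial 0 : K))⁻¹ • s ^ 0 := by
    simp
  rw [hx0]
  have hmul : x * (∑ k ∈ Finset.range m', ((k + 1).factorial : K)⁻¹ • s ^ (k + 1) +
      (Nat.factorial 0 : K)⁻¹ • s ^ 0) = ∑ k ∈ Finset.range m', ((k.factorial : K))⁻¹ • (x * s ^ k) := by
    rw [← Finset.sum_range_succ' (fun k => ((k.factorial : K))⁻¹ • s ^ k) m', Finset.mul_sum]
    rw [Finset.sum_range_succ]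
    simp only [mul_smul_comm]
    rw [hsm, mul_zero, smul_zero, add_zero]
  rw [hmul]
  abel

lemma gexp_list_sum : ∀ (l : List (Gr K I)), (∀ x ∈ l, ∀ y ∈ l, Commute x y) →
    (∀ x ∈ l, x * x = 0) → ∀ {m : ℕ}, l.length + 1 ≤ m →
      gexp K I m l.sum = (l.map (fun x => 1 + x)).prod
  | [], _, _, m, hm => by
    rw [List.sum_nil, List.map_nil, List.prod_nil]
    exact gexp_zero (by omega)
  | x :: l, hc, hs, m, hm => by
    have hxl : Commute x l.sum := Commute.list_sum_right _ _ fun y hy =>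
      hc x (by simp) y (by simp [hy])
    have hx : x * x = 0 := hs x (by simp)
    have hnil : l.sum ^ (l.length + 1) = 0 :=
      list_sum_pow_eq_zero l (fun a ha b hb => hc a (by simp [ha]) b (by simp [hb]))
        (fun a ha => hs a (by simp [ha]))
    have hm' : l.length + 2 ≤ m := by simp [List.length_cons] at hm; omega
    rw [List.sum_cons, gexp_add_of_sq_zero hxl hx hnil (by omega),
      gexp_list_sum l (fun a ha b hb => hc a (by simp [ha]) b (by simp [hb]))
        (fun a ha => hs a (by simp [ha])) (by omega : l.length + 1 ≤ m)]
    simp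

end Gexp

section Ext

variable {K : Type} [Field K] {I : Type} [DecidableEq I]

lemma gen_def (x : I) : gen K I x = ExteriorAlgebra.ι K (Pi.single x 1) := rfl

lemma ι_anticomm (x y : I → K) : ι K x * ι K y = -(ι K y * ι K x) :=
  eq_neg_of_add_eq_zero_left (ι_add_mul_swap x y)

lemma ι_comm_pair (a z w : I → K) : ι K a * (ι K z * ι K w) = (ι K z * ι K w) * ι K a := by
  rw [← mul_assoc, ι_anticomm a z, neg_mul, mul_assoc, ι_anticomm a w, mul_neg, neg_neg,
    ← mul_assoc]

lemma pair_commute (x y z w : I → K) : Commute (ι K x * ι K y) (ι K z * ι K w) := by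
  show _ = _
  rw [mul_assoc, ι_comm_pair y z w, ← mul_assoc, ι_comm_pair x z w, mul_assoc]

lemma pair_shared_zero (a b c : I → K) : (ι K a * ι K c) * (ι K b * ι K c) = 0 := by
  rw [mul_assoc, ← mul_assoc (ι K c), ι_anticomm c b, neg_mul, mul_assoc (ι K b), ι_sq_zero]
  simp

lemma gen_sq (t : I) : gen K I t * gen K I t = 0 := ι_sq_zero _

lemma gen_mem_notInvolving {u t : I} (h : u ≠ t) : gen K I u ∈ notInvolving K I t :=
  Algebra.subset_adjoin ⟨u, h, rfl⟩

lemma ι_mem_notInvolving {t : I} [Fintype I] {v : I → K} (hv : v t = 0) :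
    ι K v ∈ notInvolving K I t := by
  have hv' : v = ∑ u : I, v u • (Pi.single u 1 : I → K) := by
    have h1 : ∀ u : I, v u • (Pi.single u 1 : I → K) = Pi.single u (v u) := by
      intro u
      rw [← Pi.single_smul, smul_eq_mul, mul_one]
    simp_rw [h1]
    rw [Finset.univ_sum_single]
  rw [hv', map_sum]
  refine Subalgebra.sum_mem _ fun u _ => ?_
  rcases eq_or_ne u t with rfl | hu
  · rw [hv, zero_smul, map_zero]; exact Subalgebra.zero_mem _
  · rw [map_smul]
    exact Subalgebra.smul_mem _ (gen_mem_notInvolving hu) _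

lemma involute_gen (u : I) : CliffordAlgebra.involute (gen K I u) = -gen K I u :=
  CliffordAlgebra.involute_ι _

/-- The parity involute commutes `gen t` past elements not involving `a_t`. -/
lemma involute_spec {t : I} {x : Gr K I} (hx : x ∈ notInvolving K I t) :
    CliffordAlgebra.involute x ∈ notInvolving K I t ∧
      gen K I t * x = CliffordAlgebra.involute x * gen K I t := by
  induction hx using Algebra.adjoin_induction with
  | mem y hy =>
    obtain ⟨u, hu, rfl⟩ := hy
    constructor
    · rw [gen_def, CliffordAlgebra.involute_ι]
      exact Subalgebra.neg_mem _ (gen_mem_notInvolving hu)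
    · rw [involute_gen, neg_mul, gen_def, gen_def]
      exact ι_anticomm _ _
  | algebraMap r =>
    refine ⟨?_, ?_⟩
    · rw [AlgHom.commutes]; exact Subalgebra.algebraMap_mem _ r
    · rw [AlgHom.commutes, Algebra.commutes]
  | add a b _ _ ha hb =>
    refine ⟨?_, ?_⟩
    · rw [map_add]; exact Subalgebra.add_mem _ ha.1 hb.1
    · rw [map_add, mul_add, ha.2, hb.2, add_mul]
  | mul a b _ _ ha hb =>
    refine ⟨?_, ?_⟩
    · rw [map_mul]; exact Subalgebra.mul_mem _ ha.1 hb.1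
    · rw [map_mul, ← mul_assoc, ha.2, mul_assoc, hb.2, ← mul_assoc]

lemma exists_dec [Fintype I] (t : I) (x : Gr K I) :
    ∃ g h : Gr K I, g ∈ notInvolving K I t ∧ h ∈ notInvolving K I t ∧
      x = g + h * gen K I t := by
  induction x using ExteriorAlgebra.induction with
  | algebraMap r =>
    exact ⟨algebraMap K _ r, 0, Subalgebra.algebraMap_mem _ r, Subalgebra.zero_mem _, by simp⟩
  | ι v =>
    refine ⟨ι K v - v t • gen K I t, algebraMap K _ (v t), ?_, Subalgebra.algebraMap_mem _ _, ?_⟩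
    · have : ι K v - v t • gen K I t = ι K (v - v t • (Pi.single t 1 : I → K)) := by
        rw [map_sub, map_smul, gen_def]
      rw [this]
      refine ι_mem_notInvolving ?_
      simp
    · rw [← Algebra.smul_def]
      abel
  | mul a b ha hb =>
    obtain ⟨g1, h1, hg1, hh1, rfl⟩ := ha
    obtain ⟨g2, h2, hg2, hh2, rfl⟩ := hb
    refine ⟨g1 * g2, g1 * h2 + h1 * CliffordAlgebra.involute g2,
      Subalgebra.mul_mem _ hg1 hg2,
      Subalgebra.add_mem _ (Subalgebra.mul_mem _ hg1 hh2)
        (Subalgebra.mul_mem _ hh1 (involute_spec hg2).1), ?_⟩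
    exact mul_dec g1 h1 g2 h2 _ _ _ (involute_spec hg2).2 (involute_spec hh2).2 (gen_sq t)
  | add a b ha hb =>
    obtain ⟨g1, h1, hg1, hh1, rfl⟩ := ha
    obtain ⟨g2, h2, hg2, hh2, rfl⟩ := hb
    exact ⟨g1 + g2, h1 + h2, Subalgebra.add_mem _ hg1 hg2, Subalgebra.add_mem _ hh1 hh2, by
      rw [add_mul]; abel⟩

lemma exists_dec' (t u : I) {x : Gr K I} (hx : x ∈ notInvolving K I u) :
    ∃ g h : Gr K I, g ∈ notInvolving K I t ∧ g ∈ notInvolving K I u ∧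
      h ∈ notInvolving K I t ∧ h ∈ notInvolving K I u ∧ x = g + h * gen K I t := by
  induction hx using Algebra.adjoin_induction with
  | mem y hy =>
    obtain ⟨w, hw, rfl⟩ := hy
    rcases eq_or_ne w t with rfl | hwt
    · exact ⟨0, 1, Subalgebra.zero_mem _, Subalgebra.zero_mem _, Subalgebra.one_mem _,
        Subalgebra.one_mem _, by simp⟩
    · exact ⟨gen K I w, 0, gen_mem_notInvolving hwt, gen_mem_notInvolving hw,
        Subalgebra.zero_mem _, Subalgebra.zero_mem _, by simp⟩
  | algebraMap r =>
    exact ⟨algebraMap K _ r, 0, Subalgebra.algebraMap_mem _ r, Subalgebra.algebraMap_mem _ r,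
      Subalgebra.zero_mem _, Subalgebra.zero_mem _, by simp⟩
  | add a b _ _ ha hb =>
    obtain ⟨g1, h1, p1, q1, p1', q1', rfl⟩ := ha
    obtain ⟨g2, h2, p2, q2, p2', q2', rfl⟩ := hb
    exact ⟨g1 + g2, h1 + h2, Subalgebra.add_mem _ p1 p2, Subalgebra.add_mem _ q1 q2,
      Subalgebra.add_mem _ p1' p2', Subalgebra.add_mem _ q1' q2', by rw [add_mul]; abel⟩
  | mul a b _ _ ha hb =>
    obtain ⟨g1, h1, p1, q1, p1', q1', rfl⟩ := ha
    obtain ⟨g2, h2, p2, q2, p2', q2', rfl⟩ := hb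
    refine ⟨g1 * g2, g1 * h2 + h1 * CliffordAlgebra.involute g2,
      Subalgebra.mul_mem _ p1 p2, Subalgebra.mul_mem _ q1 q2,
      Subalgebra.add_mem _ (Subalgebra.mul_mem _ p1 p2')
        (Subalgebra.mul_mem _ p1' (involute_spec p2).1),
      Subalgebra.add_mem _ (Subalgebra.mul_mem _ q1 q2')
        (Subalgebra.mul_mem _ q1' (involute_spec q2).1), ?_⟩
    exact mul_dec g1 h1 g2 h2 _ _ _ (involute_spec p2).2 (involute_spec p2').2 (gen_sq t)

end Ext

section Berezin

variable {K : Type} [Field K] {I : Type} [DecidableEq I] [Fintype I]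
variable {B : I → (Gr K I →ₗ[K] Gr K I)} (hB : IsBerezinFamily K I B)

include hB

lemma B_of_mem {t : I} {x : Gr K I} (hx : x ∈ notInvolving K I t) : B t x = 0 := by
  have := hB t x 0 hx (Subalgebra.zero_mem _)
  simpa using this

lemma B_mul_gen {t : I} {x : Gr K I} (hx : x ∈ notInvolving K I t) :
    B t (x * gen K I t) = x := by
  have := hB t 0 x (Subalgebra.zero_mem _) hx
  simpa using this

lemma B_gen (t : I) : B t (gen K I t) = 1 := by
  have := B_mul_gen hB (t := t) (Subalgebra.one_mem _)
  rwa [one_mul] at this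

lemma B_mul_left {t : I} {g : Gr K I} (hg : g ∈ notInvolving K I t) (x : Gr K I) :
    B t (g * x) = g * B t x := by
  obtain ⟨x0, x1, h0, h1, rfl⟩ := exists_dec t x
  rw [hB t x0 x1 h0 h1]
  have : g * (x0 + x1 * gen K I t) = g * x0 + g * x1 * gen K I t := by
    rw [mul_add, mul_assoc]
  rw [this, hB t _ _ (Subalgebra.mul_mem _ hg h0) (Subalgebra.mul_mem _ hg h1)]

lemma B_mem {t u : I} {x : Gr K I} (hx : x ∈ notInvolving K I u) :
    B t x ∈ notInvolving K I u := by
  obtain ⟨g, h, hgt, hgu, hht, hhu, rfl⟩ := exists_dec' t u hx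
  rw [hB t g h hgt hht]
  exact hhu

end Berezin

section Iter

variable {K : Type} [Field K] {n : ℕ}
variable {B : (Fin n ⊕ Fin n) → (Gr K (Fin n ⊕ Fin n) →ₗ[K] Gr K (Fin n ⊕ Fin n))}
variable (hB : IsBerezinFamily K (Fin n ⊕ Fin n) B)

/-- The iterated Berezin integral as a linear map. -/
def Iter (B : (Fin n ⊕ Fin n) → (Gr K (Fin n ⊕ Fin n) →ₗ[K] Gr K (Fin n ⊕ Fin n)))
    (l : List (Fin n)) : Gr K (Fin n ⊕ Fin n) →ₗ[K] Gr K (Fin n ⊕ Fin n) :=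
  l.foldr (fun i F => B (Sum.inl i) ∘ₗ B (Sum.inr i) ∘ₗ F) LinearMap.id

lemma Iter_nil (x : Gr K (Fin n ⊕ Fin n)) : Iter B [] x = x := rfl

lemma Iter_cons (i : Fin n) (l : List (Fin n)) (x : Gr K (Fin n ⊕ Fin n)) :
    Iter B (i :: l) x = B (Sum.inl i) (B (Sum.inr i) (Iter B l x)) := rfl

lemma foldr_eq_Iter (l : List (Fin n)) (x : Gr K (Fin n ⊕ Fin n)) :
    l.foldr (fun i acc => B (Sum.inl i) (B (Sum.inr i) acc)) x = Iter B l x := by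
  induction l with
  | nil => rfl
  | cons i l ih => rw [List.foldr_cons, ih, Iter_cons]

include hB

lemma Iter_mem {u : Fin n ⊕ Fin n} (l : List (Fin n)) {x : Gr K (Fin n ⊕ Fin n)}
    (hx : x ∈ notInvolving K (Fin n ⊕ Fin n) u) :
    Iter B l x ∈ notInvolving K (Fin n ⊕ Fin n) u := by
  induction l with
  | nil => exact hx
  | cons i l ih => exact B_mem hB (B_mem hB ih)

lemma Iter_kill {i0 : Fin n} (l : List (Fin n)) {x : Gr K (Fin n ⊕ Fin n)}
    (hx : x ∈ notInvolving K (Fin n ⊕ Fin n) (Sum.inl i0)) (hi : i0 ∈ l) :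
    Iter B l x = 0 := by
  induction l with
  | nil => simp at hi
  | cons i l ih =>
    rw [Iter_cons]
    by_cases h : i0 ∈ l
    · rw [ih h, map_zero, map_zero]
    · have hii : i = i0 := by
        rcases List.mem_cons.mp hi with h' | h'
        · exact h'.symm
        · exact absurd h' h
      subst hii
      rw [B_of_mem hB (B_mem hB (Iter_mem hB l hx))]

lemma Iter_mul_left (l : List (Fin n)) {g : Gr K (Fin n ⊕ Fin n)}
    (hg : ∀ j ∈ l, g ∈ notInvolving K (Fin n ⊕ Fin n) (Sum.inl j) ∧
      g ∈ notInvolving K (Fin n ⊕ Fin n) (Sum.inr j)) (x : Gr K (Fin n ⊕ Fin n)) :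
    Iter B l (g * x) = g * Iter B l x := by
  induction l with
  | nil => rfl
  | cons i l ih =>
    rw [Iter_cons, Iter_cons, ih (fun j hj => hg j (List.mem_cons_of_mem i hj)),
      B_mul_left hB (hg i List.mem_cons_self).2,
      B_mul_left hB (hg i List.mem_cons_self).1]

lemma Iter_full (l : List (Fin n)) (hnd : l.Nodup) :
    Iter B l ((l.map (fun i => gen K (Fin n ⊕ Fin n) (Sum.inl i) *
      gen K (Fin n ⊕ Fin n) (Sum.inr i))).prod) = 1 := by
  induction l with
  | nil => exact Iter_nil 1
  | cons i l ih =>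
    rw [List.map_cons, List.prod_cons, Iter_cons]
    have hnd' := (List.nodup_cons.mp hnd).2
    have hni : i ∉ l := (List.nodup_cons.mp hnd).1
    rw [Iter_mul_left hB l (fun j hj => ?_) _]
    · rw [ih hnd', mul_one]
      rw [B_mul_gen hB (gen_mem_notInvolving (by simp)),
        B_gen hB]
    · have hij : i ≠ j := fun h => hni (h ▸ hj)
      constructor
      · exact Subalgebra.mul_mem _ (gen_mem_notInvolving (by simp [hij]))
          (gen_mem_notInvolving (by simp))
      · exact Subalgebra.mul_mem _ (gen_mem_notInvolving (by simp))
          (gen_mem_notInvolving (by simp [hij]))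

end Iter

section Alt

variable {K : Type} [Field K] {n : ℕ}

/-- The multilinear map `w ↦ ∏ i, a_i * ι (w i)`. -/
def Tmap (K : Type) [Field K] (n : ℕ) :
    MultilinearMap K (fun _ : Fin n => ((Fin n ⊕ Fin n) → K)) (Gr K (Fin n ⊕ Fin n)) :=
  (MultilinearMap.mkPiAlgebraFin K n _).compLinearMap
    (fun i => LinearMap.mulLeft K (gen K (Fin n ⊕ Fin n) (Sum.inl i)) ∘ₗ ExteriorAlgebra.ι K)

lemma Tmap_apply (w : Fin n → ((Fin n ⊕ Fin n) → K)) :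
    Tmap K n w = (List.ofFn (fun i =>
      ExteriorAlgebra.ι K (Pi.single (Sum.inl i) 1) * ExteriorAlgebra.ι K (w i))).prod := by
  rfl

lemma Tmap_eq_zero (w : Fin n → ((Fin n ⊕ Fin n) → K)) (i j : Fin n) (hw : w i = w j)
    (hij : i ≠ j) : Tmap K n w = 0 := by
  classical
  set p : Fin n → Gr K (Fin n ⊕ Fin n) := fun t =>
    ExteriorAlgebra.ι K (Pi.single (Sum.inl t) 1) * ExteriorAlgebra.ι K (w t) with hp
  have hc : ((Finset.univ : Finset (Fin n)) : Set (Fin n)).Pairwise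
      fun a b => Commute (p a) (p b) := fun a _ b _ _ => pair_commute _ _ _ _
  have hc2 : (((List.finRange n).toFinset : Finset (Fin n)) : Set (Fin n)).Pairwise
      fun a b => Commute (p a) (p b) := by simpa [List.toFinset_finRange] using hc
  have e1 : Tmap K n w = Finset.univ.noncommProd p hc :=
    calc Tmap K n w = ((List.finRange n).map p).prod := by rw [Tmap_apply, List.ofFn_eq_map]
    _ = ((List.finRange n).toFinset).noncommProd p hc2 :=
      (Finset.noncommProd_toFinset _ _ hc2 (List.nodup_finRange n)).symm
    _ = Finset.univ.noncommProd p hc :=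
      Finset.noncommProd_congr (List.toFinset_finRange n) (fun x _ => rfl) hc2
  have hj : j ∈ Finset.univ.erase i := Finset.mem_erase.mpr ⟨hij.symm, Finset.mem_univ j⟩
  rw [e1, ← Finset.mul_noncommProd_erase Finset.univ (Finset.mem_univ i) p hc,
    ← Finset.mul_noncommProd_erase _ hj p (fun a _ b _ _ => pair_commute _ _ _ _), ← mul_assoc]
  have h0 : p i * p j = 0 := by
    rw [hp]
    show (ExteriorAlgebra.ι K (Pi.single (Sum.inl i) 1) * ExteriorAlgebra.ι K (w i)) *
      (ExteriorAlgebra.ι K (Pi.single (Sum.inl j) 1) * ExteriorAlgebra.ι K (w j)) = 0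
    rw [← hw]
    exact pair_shared_zero _ _ _
  rw [h0, zero_mul]

/-- The alternating map `w ↦ ∏ i, a_i * ι (w i)`. -/
def Talt (K : Type) [Field K] (n : ℕ) :
    AlternatingMap K ((Fin n ⊕ Fin n) → K) (Gr K (Fin n ⊕ Fin n)) (Fin n) :=
  { Tmap K n with
    map_eq_zero_of_eq' := fun v i j h hij => Tmap_eq_zero v i j h hij }

lemma Talt_apply (w : Fin n → ((Fin n ⊕ Fin n) → K)) : Talt K n w = Tmap K n w := rfl

end Alt

end BerezinAux



open BerezinAux ExteriorAlgebra in
/-- Let `a_1, …, a_n, a_1*, …, a_n*` be `2n` Grassmann generators (indexed by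
`Fin n ⊕ Fin n`: `Sum.inl i ↦ a_{i+1}`, `Sum.inr j ↦ a_{j+1}*`), let `M` be an `n × n`
matrix over a field `K` of characteristic zero, and set `f = Σ_{i,j} M_{ij} a_i a_j*`.
Then the iterated Berezin integral `∫ exp f  da_n* da_n ⋯ da_1* da_1` equals `det M`. -/
theorem berezin_integral_exp_eq_det (K : Type) [Field K] [CharZero K] (n : ℕ)
    (M : Matrix (Fin n) (Fin n) K)
    (B : (Fin n ⊕ Fin n) → (Gr K (Fin n ⊕ Fin n) →ₗ[K] Gr K (Fin n ⊕ Fin n)))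
    (hB : IsBerezinFamily K (Fin n ⊕ Fin n) B) :
    (List.finRange n).foldr (fun i acc => B (Sum.inl i) (B (Sum.inr i) acc))
        (gexp K (Fin n ⊕ Fin n) (2 * n + 1)
          (∑ i : Fin n, ∑ j : Fin n,
            M i j • (gen K (Fin n ⊕ Fin n) (Sum.inl i) * gen K (Fin n ⊕ Fin n) (Sum.inr j)))) =
      M.det • (1 : Gr K (Fin n ⊕ Fin n)) := by
  classical
  let e : Fin n → (Fin n ⊕ Fin n) → K := fun j => Pi.single (Sum.inr j) 1
  let v : Fin n → (Fin n ⊕ Fin n) → K := fun i => ∑ j, M i j • e j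
  let r : Fin n → Gr K (Fin n ⊕ Fin n) := fun i => gen K (Fin n ⊕ Fin n) (Sum.inl i) * ι K (v i)
  -- Step 1: rewrite f as a list sum
  have hf : (∑ i : Fin n, ∑ j : Fin n,
      M i j • (gen K (Fin n ⊕ Fin n) (Sum.inl i) * gen K (Fin n ⊕ Fin n) (Sum.inr j)))
        = (List.ofFn r).sum := by
    rw [List.sum_ofFn]
    refine Finset.sum_congr rfl fun i _ => ?_
    show _ = gen K (Fin n ⊕ Fin n) (Sum.inl i) * ι K (v i)
    rw [show (v i) = ∑ j, M i j • e j from rfl, map_sum, Finset.mul_sum]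
    refine Finset.sum_congr rfl fun j _ => ?_
    rw [map_smul, mul_smul_comm]
    rfl
  -- commutation and square-zero for the r i
  have hcomm : ∀ x ∈ List.ofFn r, ∀ y ∈ List.ofFn r, Commute x y := by
    intro x hx y hy
    simp only [List.mem_ofFn, Set.mem_range] at hx hy
    obtain ⟨i, rfl⟩ := hx
    obtain ⟨i', rfl⟩ := hy
    exact pair_commute (Pi.single (Sum.inl i) 1) (v i) (Pi.single (Sum.inl i') 1) (v i')
  have hsq : ∀ x ∈ List.ofFn r, x * x = 0 := by
    intro x hx
    simp only [List.mem_ofFn, Set.mem_range] at hx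
    obtain ⟨i, rfl⟩ := hx
    show (ι K (Pi.single (Sum.inl i) 1) * ι K (v i)) *
      (ι K (Pi.single (Sum.inl i) 1) * ι K (v i)) = 0
    exact pair_shared_zero _ _ _
  have hlen : (List.ofFn r).length + 1 ≤ 2 * n + 1 := by
    rw [List.length_ofFn]; omega
  rw [hf, gexp_list_sum _ hcomm hsq hlen, foldr_eq_Iter, List.map_ofFn]
  -- Step 2: expand the product over subsets
  have hprod : (List.ofFn ((fun x => 1 + x) ∘ r)).prod
      = MultilinearMap.mkPiAlgebraFin K n (Gr K (Fin n ⊕ Fin n))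
          ((fun _ => (1 : Gr K (Fin n ⊕ Fin n))) + r) := by
    rw [MultilinearMap.mkPiAlgebraFin_apply]
    rfl
  rw [hprod, MultilinearMap.map_add_univ, map_sum]
  -- Step 3: all subsets except ∅ (i.e. piecewise = r everywhere) die
  have hkill : ∀ s : Finset (Fin n), s ≠ ∅ →
      Iter B (List.finRange n)
        (MultilinearMap.mkPiAlgebraFin K n (Gr K (Fin n ⊕ Fin n))
          (s.piecewise (fun _ => (1 : Gr K (Fin n ⊕ Fin n))) r)) = 0 := by
    intro s hs
    obtain ⟨i0, hi0⟩ := Finset.nonempty_iff_ne_empty.mpr hs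
    refine Iter_kill hB _ ?_ (List.mem_finRange i0)
    rw [MultilinearMap.mkPiAlgebraFin_apply]
    refine list_prod_mem ?_
    intro x hx
    simp only [List.mem_ofFn, Set.mem_range] at hx
    obtain ⟨i, rfl⟩ := hx
    by_cases h : i ∈ s
    · rw [Finset.piecewise_eq_of_mem _ _ _ h]
      exact Subalgebra.one_mem _
    · rw [Finset.piecewise_eq_of_notMem _ _ _ h]
      have hii0 : i ≠ i0 := fun hh => h (hh ▸ hi0)
      refine Subalgebra.mul_mem _ (gen_mem_notInvolving (by simp [hii0])) ?_
      refine ι_mem_notInvolving ?_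
      show (∑ j, M i j • e j) (Sum.inl i0) = 0
      rw [Finset.sum_apply]
      refine Finset.sum_eq_zero fun j _ => ?_
      rw [Pi.smul_apply]
      show M i j • (Pi.single (Sum.inr j) 1 : (Fin n ⊕ Fin n) → K) (Sum.inl i0) = 0
      rw [Pi.single_eq_of_ne (by simp)]
      simp
  rw [Finset.sum_eq_single ∅ (fun s _ hs => hkill s hs) (by simp)]
  rw [Finset.piecewise_empty]
  -- Step 4: the surviving term is `Tmap K n v`
  have hT : MultilinearMap.mkPiAlgebraFin K n (Gr K (Fin n ⊕ Fin n)) r = Tmap K n v := rfl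
  rw [hT]
  -- Step 5: multilinear expansion over functions φ
  have expand : Tmap K n v
      = ∑ φ ∈ Fintype.piFinset (fun _ : Fin n => (Finset.univ : Finset (Fin n))),
        (∏ i, M i (φ i)) • Tmap K n (fun i => e (φ i)) := by
    have h1 : Tmap K n v = Tmap K n (fun i => ∑ j ∈ Finset.univ, M i j • e j) := rfl
    rw [h1, MultilinearMap.map_sum_finset]
    refine Finset.sum_congr rfl fun φ _ => ?_
    rw [MultilinearMap.map_smul_univ]
  rw [expand, map_sum]
  simp only [map_smul]
  -- Step 6: non-injective φ die
  have hninj : ∀ φ : Fin n → Fin n, ¬Function.Injective φ →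
      Tmap K n (fun i => e (φ i)) = 0 := by
    intro φ hφ
    obtain ⟨a, b, hab, hne⟩ := Function.not_injective_iff.mp hφ
    exact Tmap_eq_zero _ a b (by simp [hab]) hne
  -- Step 7: reduce to permutations
  have hperm : ∑ φ ∈ Fintype.piFinset (fun _ : Fin n => (Finset.univ : Finset (Fin n))),
      ((∏ i, M i (φ i)) • Iter B (List.finRange n) (Tmap K n (fun i => e (φ i))))
      = ∑ σ : Equiv.Perm (Fin n),
        ((∏ i, M i (σ i)) • Iter B (List.finRange n) (Tmap K n (fun i => e (σ i)))) := by
    rw [← Finset.sum_filter_of_ne (p := fun φ => Function.Bijective φ)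
      (fun φ _ hφ0 => ?_)]
    · refine (Finset.sum_bij (fun (σ : Equiv.Perm (Fin n)) _ => (σ : Fin n → Fin n))
        ?_ ?_ ?_ ?_).symm
      · intro σ _
        refine Finset.mem_filter.mpr ⟨?_, σ.bijective⟩
        exact Fintype.mem_piFinset.mpr fun _ => Finset.mem_univ _
      · intro σ1 _ σ2 _ h
        exact Equiv.coe_fn_injective h
      · intro φ hφ
        obtain ⟨-, hbij⟩ := Finset.mem_filter.mp hφ
        exact ⟨Equiv.ofBijective φ hbij, Finset.mem_univ _, rfl⟩
      · intro σ _
        rfl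
    · by_contra hbij
      have hni : ¬Function.Injective φ := by
        intro hinj
        exact hbij (Finite.injective_iff_bijective.mp hinj)
      rw [hninj φ hni, map_zero, smul_zero] at hφ0
      exact hφ0 rfl
  rw [hperm]
  -- Step 8: evaluate each permutation term
  have hfull : Iter B (List.finRange n) (Talt K n e) = 1 := by
    have h2 : (Talt K n e : Gr K (Fin n ⊕ Fin n)) = ((List.finRange n).map (fun i =>
        gen K (Fin n ⊕ Fin n) (Sum.inl i) * gen K (Fin n ⊕ Fin n) (Sum.inr i))).prod := by
      rw [Talt_apply, Tmap_apply, List.ofFn_eq_map]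
      rfl
    rw [h2]
    exact Iter_full hB _ (List.nodup_finRange n)
  have hterm : ∀ σ : Equiv.Perm (Fin n),
      Iter B (List.finRange n) (Tmap K n (fun i => e (σ i)))
        = ((Equiv.Perm.sign σ : ℤ) : K) • (1 : Gr K (Fin n ⊕ Fin n)) := by
    intro σ
    have h1 : Tmap K n (fun i => e (σ i)) = Talt K n (e ∘ σ) := rfl
    rw [h1, AlternatingMap.map_perm, Units.smul_def, map_zsmul, hfull,
      ← Int.cast_smul_eq_zsmul K]
  -- Step 9: determinant
  have det' : M.det = ∑ σ : Equiv.Perm (Fin n),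
      ((Equiv.Perm.sign σ : ℤ) : K) * ∏ i, M i (σ i) := by
    rw [← Matrix.det_transpose, Matrix.det_apply]
    refine Finset.sum_congr rfl fun σ _ => ?_
    rw [Units.smul_def, zsmul_eq_mul]
    congr 1
  rw [det', Finset.sum_smul]
  refine Finset.sum_congr rfl fun σ _ => ?_
  rw [hterm σ, smul_smul, mul_comm]
end
end

section
/- Let f = Σ_{i,j} M_{ij} a_i a_j* be the bilinear form in Grassmann generators associated with an N×N matrix M over a field of characteristic zero. Then for any n and indices i_1 < ⋯ < i_n and j_1 < ⋯ < j_n, the coefficient of the monomial a_{i_1} a_{j_1}* a_{i_2} a_{j_2}* ⋯ a_{i_n} a_{j_n}* in the expansion of exp(f) in the standard monomial basis equals the minor of M formed by rows i_1,...,i_n and columns j_1,...,j_n. -/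
noncomputable section

open ExteriorAlgebra

namespace GrAux

variable {K : Type} [Field K] {I : Type} [DecidableEq I]

def genv (K : Type) [Field K] {I : Type} [DecidableEq I] (x : I) : I → K := Pi.single x 1

lemma gen_eq (x : I) : gen K I x = ι K (genv K x) := rfl

lemma genv_injective : Function.Injective (genv K (I := I)) := by
  intro x y h
  by_contra hxy
  have h1 := congrFun h x
  simp [genv, Pi.single_apply, hxy] at h1

omit [DecidableEq I] in
lemma ι_anticomm (x y : I → K) :
    ι K x * ι K y = -(ι K y * ι K x) :=
  eq_neg_of_add_eq_zero_left (ι_add_mul_swap x y)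

omit [DecidableEq I] in
lemma ι_mul_list (x : I → K) (L : List (I → K)) :
    ι K x * (L.map (ι K)).prod
      = ((-1 : K) ^ L.length) • ((L.map (ι K)).prod * ι K x) := by
  induction L with
  | nil => simp
  | cons hd tl ih =>
    simp only [List.map_cons, List.prod_cons, List.length_cons]
    rw [← mul_assoc, ι_anticomm x hd, neg_mul, mul_assoc, ih, mul_smul_comm, pow_succ,
      ← neg_smul]
    congr 1
    · ring
    · noncomm_ring

omit [DecidableEq I] in
lemma interleave_prod (k : ℕ) : ∃ c : K, ∀ a b : Fin k → (I → K),
    (List.ofFn fun t => ι K (a t) * ι K (b t)).prod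
      = c • ((List.ofFn fun t => ι K (a t)).prod * (List.ofFn fun t => ι K (b t)).prod) := by
  induction k with
  | zero => exact ⟨1, fun a b => by simp⟩
  | succ k ih =>
    obtain ⟨c, hc⟩ := ih
    refine ⟨c * (-1) ^ k, fun a b => ?_⟩
    rw [List.ofFn_succ (f := fun t => ι K (a t) * ι K (b t)),
      List.ofFn_succ (f := fun t => ι K (a t)), List.ofFn_succ (f := fun t => ι K (b t)),
      List.prod_cons, List.prod_cons, List.prod_cons, hc]
    have key : ι K (b 0) * (List.ofFn fun t => ι K (a t.succ)).prod
        = ((-1 : K) ^ k) • ((List.ofFn fun t => ι K (a t.succ)).prod * ι K (b 0)) := by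
      have := ι_mul_list (b 0) (List.ofFn fun t : Fin k => a t.succ)
      simpa [List.map_ofFn, Function.comp_def] using this
    calc ι K (a 0) * ι K (b 0) *
          (c • ((List.ofFn fun t => ι K (a t.succ)).prod *
            (List.ofFn fun t => ι K (b t.succ)).prod))
        = c • (ι K (a 0) * ((ι K (b 0) * (List.ofFn fun t => ι K (a t.succ)).prod) *
            (List.ofFn fun t => ι K (b t.succ)).prod)) := by
          rw [mul_smul_comm]; congr 1; noncomm_ring
      _ = c • (ι K (a 0) * ((((-1 : K) ^ k) • ((List.ofFn fun t => ι K (a t.succ)).prod *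
            ι K (b 0))) * (List.ofFn fun t => ι K (b t.succ)).prod)) := by rw [key]
      _ = (c * (-1) ^ k) • (ι K (a 0) * (List.ofFn fun t => ι K (a t.succ)).prod *
            (ι K (b 0) * (List.ofFn fun t => ι K (b t.succ)).prod)) := by
          rw [smul_mul_assoc, mul_smul_comm, smul_smul]; congr 1; noncomm_ring

omit [DecidableEq I] in
lemma ιMulti_cast {m m' : ℕ} (h : m' = m) (v : Fin m → (I → K)) :
    ιMulti K m' (v ∘ Fin.cast h) = ιMulti K m v := by
  subst h
  congr

lemma exists_perm_comp {α : Type*} {m : ℕ} {f g : Fin m → α}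
    (hf : Function.Injective f) (hg : Function.Injective g)
    (h : Set.range f = Set.range g) : ∃ σ : Equiv.Perm (Fin m), f = g ∘ σ := by
  refine ⟨(Equiv.ofInjective f hf).trans ((Equiv.setCongr h).trans (Equiv.ofInjective g hg).symm),
    ?_⟩
  funext i
  simp only [Function.comp_apply, Equiv.trans_apply]
  rw [Equiv.apply_ofInjective_symm hg]
  rfl

lemma list_gen_prod (l : List I) :
    (l.map (gen K I)).prod = ιMulti K l.length fun i => genv K (l.get i) := by
  rw [ιMulti_apply]
  congr 1
  have : (List.ofFn fun i => ι K (genv K (l.get i))) = (List.ofFn l.get).map (gen K I) := by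
    rw [List.map_ofFn]
    rfl
  rw [this, List.ofFn_get]

def uFun {α : Type*} {k : ℕ} (A B : Fin k → α) : Fin (k + k) → α :=
  Sum.elim A B ∘ finSumFinEquiv.symm

lemma uFun_castAdd {α : Type*} {k : ℕ} (A B : Fin k → α) (i : Fin k) :
    uFun A B (Fin.castAdd k i) = A i := by
  simp [uFun, finSumFinEquiv_symm_apply_castAdd]

lemma uFun_natAdd {α : Type*} {k : ℕ} (A B : Fin k → α) (i : Fin k) :
    uFun A B (Fin.natAdd k i) = B i := by
  show Sum.elim A B (finSumFinEquiv.symm (Fin.natAdd k i)) = B i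
  rw [finSumFinEquiv_symm_apply_natAdd]
  rfl

lemma block_ιMulti {k : ℕ} (A B : Fin k → I) :
    ιMulti K (k + k) (fun i => genv K (uFun A B i))
      = (List.ofFn fun t => ι K (genv K (A t))).prod *
        (List.ofFn fun t => ι K (genv K (B t))).prod := by
  rw [ιMulti_apply, List.ofFn_add, List.prod_append]
  congr 1
  · simp only [show ∀ i : Fin k, uFun A B (Fin.castLE (Nat.le_add_right k k) i) = A i from
      uFun_castAdd A B]
  · simp only [uFun_natAdd]

lemma interleave_eq_ιMulti (k : ℕ) : ∃ c : K, ∀ A B : Fin k → I,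
    (List.ofFn fun t => gen K I (A t) * gen K I (B t)).prod
      = c • ιMulti K (k + k) (fun i => genv K (uFun A B i)) := by
  obtain ⟨c, hc⟩ := interleave_prod (K := K) (I := I) k
  exact ⟨c, fun A B => by
    rw [block_ιMulti]; exact hc (fun t => genv K (A t)) (fun t => genv K (B t))⟩


lemma image_uFun {k : ℕ} (A B : Fin k → I) :
    Finset.image (uFun A B) Finset.univ
      = Finset.image A Finset.univ ∪ Finset.image B Finset.univ := by
  ext x
  simp only [Finset.mem_image, Finset.mem_union, Finset.mem_univ, true_and, uFun,
    Function.comp_apply]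
  constructor
  · rintro ⟨i, hi⟩
    rcases h : finSumFinEquiv.symm i with t | t <;> rw [h] at hi
    · exact Or.inl ⟨t, hi⟩
    · exact Or.inr ⟨t, hi⟩
  · rintro (⟨t, ht⟩ | ⟨t, ht⟩)
    · exact ⟨finSumFinEquiv (Sum.inl t), by rw [Equiv.symm_apply_apply]; exact ht⟩
    · exact ⟨finSumFinEquiv (Sum.inr t), by rw [Equiv.symm_apply_apply]; exact ht⟩

omit [DecidableEq I] in
lemma uFun_inj_left {k : ℕ} {A B : Fin k → I} (h : Function.Injective (uFun A B)) :
    Function.Injective A := by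
  intro t t' htt
  have := h (a₁ := Fin.castAdd k t) (a₂ := Fin.castAdd k t')
    (by rw [uFun_castAdd, uFun_castAdd, htt])
  exact Fin.castAdd_injective _ _ this

omit [DecidableEq I] in
lemma uFun_inj_right {k : ℕ} {A B : Fin k → I} (h : Function.Injective (uFun A B)) :
    Function.Injective B := by
  intro t t' htt
  have := h (a₁ := Fin.natAdd k t) (a₂ := Fin.natAdd k t')
    (by rw [uFun_natAdd, uFun_natAdd, htt])
  have h2 : k + (t : ℕ) = k + (t' : ℕ) := by simpa [Fin.ext_iff] using this
  exact Fin.ext (by omega)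

/-- The product of pair generators associated with a tuple of index pairs. -/
def Gfun (K : Type) [Field K] {N : ℕ} {k : ℕ} (d : Fin k → Fin N × Fin N) :
    Gr K (Fin N ⊕ Fin N) :=
  (List.ofFn fun t => gen K (Fin N ⊕ Fin N) (Sum.inl (d t).1) *
    gen K (Fin N ⊕ Fin N) (Sum.inr (d t).2)).prod

/-- The block index function of a tuple of pairs. -/
def uOf {N k : ℕ} (d : Fin k → Fin N × Fin N) : Fin (k + k) → (Fin N ⊕ Fin N) :=
  uFun (fun t => Sum.inl (d t).1) (fun t => Sum.inr (d t).2)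

lemma Gfun_eq_c (K : Type) [Field K] (N : ℕ) (k : ℕ) : ∃ c : K,
    ∀ d : Fin k → Fin N × Fin N,
      Gfun K d = c • ιMulti K (k + k) (fun i => genv K (uOf d i)) := by
  obtain ⟨c, hc⟩ := interleave_eq_ιMulti (K := K) (I := Fin N ⊕ Fin N) k
  exact ⟨c, fun d => hc _ _⟩

lemma Gfun_zero_of_not_inj {K : Type} [Field K] {N k : ℕ} (d : Fin k → Fin N × Fin N)
    (h : ¬ Function.Injective (uOf d)) : Gfun K d = 0 := by
  obtain ⟨c, hc⟩ := Gfun_eq_c K N k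
  rw [hc d]
  obtain ⟨i, j, hij, hne⟩ := Function.not_injective_iff.mp h
  rw [AlternatingMap.map_eq_zero_of_eq _ _ (by rw [hij]) hne, smul_zero]

lemma pow_expand {K : Type} [Field K] {N : ℕ} (M : Matrix (Fin N) (Fin N) K) (k : ℕ) :
    (∑ i : Fin N, ∑ j : Fin N, M i j • (gen K (Fin N ⊕ Fin N) (Sum.inl i) *
        gen K (Fin N ⊕ Fin N) (Sum.inr j))) ^ k
      = ∑ d : Fin k → Fin N × Fin N, (∏ t, M (d t).1 (d t).2) • Gfun K d := by
  have hsum : (∑ p : Fin N × Fin N, M p.1 p.2 • (gen K (Fin N ⊕ Fin N) (Sum.inl p.1) *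
      gen K (Fin N ⊕ Fin N) (Sum.inr p.2)))
      = ∑ i : Fin N, ∑ j : Fin N, M i j • (gen K (Fin N ⊕ Fin N) (Sum.inl i) *
        gen K (Fin N ⊕ Fin N) (Sum.inr j)) := Fintype.sum_prod_type _
  rw [← hsum]
  induction k with
  | zero =>
    rw [pow_zero]
    have h1 : ∀ d : Fin 0 → Fin N × Fin N,
        (∏ t, M (d t).1 (d t).2) • Gfun K d = 1 := by
      intro d
      simp [Gfun]
    rw [Finset.sum_congr rfl (fun d _ => h1 d), Finset.sum_const, Finset.card_univ]
    simp
  | succ k ih =>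
    rw [pow_succ', ih, Fintype.sum_mul_sum]
    have step : ∑ q : (Fin N × Fin N) × (Fin k → Fin N × Fin N),
        (M q.1.1 q.1.2 • (gen K (Fin N ⊕ Fin N) (Sum.inl q.1.1) *
          gen K (Fin N ⊕ Fin N) (Sum.inr q.1.2))) *
          ((∏ t, M (q.2 t).1 (q.2 t).2) • Gfun K q.2)
        = ∑ d : Fin (k+1) → Fin N × Fin N, (∏ t, M (d t).1 (d t).2) • Gfun K d := by
      apply Fintype.sum_equiv (Fin.consEquiv (fun _ : Fin (k+1) => Fin N × Fin N))
      rintro ⟨p, d⟩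
      have hcons : (Fin.consEquiv (fun _ : Fin (k+1) => Fin N × Fin N)) (p, d)
          = Fin.cons p d := rfl
      rw [hcons]
      have h2 : (∏ t : Fin (k+1), M ((Fin.cons p d : Fin (k+1) → Fin N × Fin N) t).1
          ((Fin.cons p d : Fin (k+1) → Fin N × Fin N) t).2)
          = M p.1 p.2 * ∏ t : Fin k, M (d t).1 (d t).2 := by
        rw [Fin.prod_univ_succ]
        simp
      have h3 : Gfun K (Fin.cons p d : Fin (k+1) → Fin N × Fin N)
          = (gen K (Fin N ⊕ Fin N) (Sum.inl p.1) * gen K (Fin N ⊕ Fin N) (Sum.inr p.2)) *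
            Gfun K d := by
        rw [Gfun, Gfun, List.ofFn_succ, List.prod_cons]
        simp
      rw [h2, h3, smul_mul_smul_comm]
    rw [← step]
    exact (Fintype.sum_prod_type (fun q : (Fin N × Fin N) × (Fin k → Fin N × Fin N) =>
      (M q.1.1 q.1.2 • (gen K (Fin N ⊕ Fin N) (Sum.inl q.1.1) *
        gen K (Fin N ⊕ Fin N) (Sum.inr q.1.2))) *
      ((∏ t, M (q.2 t).1 (q.2 t).2) • Gfun K q.2))).symm

lemma det_sum_perm {K : Type} [Field K] {N n : ℕ} (M : Matrix (Fin N) (Fin N) K)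
    (row col : Fin n → Fin N) :
    ∑ q : Equiv.Perm (Fin n) × Equiv.Perm (Fin n),
        (∏ t, M (row (q.1 t)) (col (q.2 t))) *
          (((Equiv.Perm.sign q.1 : ℤ) : K) * ((Equiv.Perm.sign q.2 : ℤ) : K))
      = (n.factorial : K) * (M.submatrix row col).det := by
  rw [Fintype.sum_prod_type]
  have hdet : (M.submatrix row col).det
      = ∑ ρ : Equiv.Perm (Fin n), ((Equiv.Perm.sign ρ : ℤ) : K) *
          ∏ s, M (row s) (col (ρ s)) := by
    rw [← Matrix.det_transpose, Matrix.det_apply]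
    refine Finset.sum_congr rfl fun ρ _ => ?_
    rw [Units.smul_def, zsmul_eq_mul]
    rfl
  have inner : ∀ π : Equiv.Perm (Fin n),
      ∑ τ : Equiv.Perm (Fin n), (∏ t, M (row (π t)) (col (τ t))) *
          (((Equiv.Perm.sign π : ℤ) : K) * ((Equiv.Perm.sign τ : ℤ) : K))
        = (M.submatrix row col).det := by
    intro π
    rw [← Equiv.sum_comp (Equiv.mulRight π)
      (fun τ => (∏ t, M (row (π t)) (col (τ t))) *
        (((Equiv.Perm.sign π : ℤ) : K) * ((Equiv.Perm.sign τ : ℤ) : K))), hdet]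
    refine Finset.sum_congr rfl fun ρ _ => ?_
    have h1 : ∏ t, M (row (π t)) (col ((Equiv.mulRight π ρ) t))
        = ∏ s, M (row s) (col (ρ s)) := by
      rw [← Equiv.prod_comp π (fun s => M (row s) (col (ρ s)))]
      refine Finset.prod_congr rfl fun t _ => ?_
      simp [Equiv.Perm.mul_apply]
    have h2 : ((Equiv.Perm.sign π : ℤ) : K) *
        ((Equiv.Perm.sign (Equiv.mulRight π ρ) : ℤ) : K) = ((Equiv.Perm.sign ρ : ℤ) : K) := by
      have hsq : ((Equiv.Perm.sign π : ℤ) : K) * ((Equiv.Perm.sign π : ℤ) : K) = 1 := by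
        rw [← Int.cast_mul, ← Units.val_mul, Int.units_mul_self, Units.val_one, Int.cast_one]
      have hmr : Equiv.mulRight π ρ = ρ * π := rfl
      rw [hmr, map_mul, Units.val_mul, Int.cast_mul]
      calc ((Equiv.Perm.sign π : ℤ) : K) * (((Equiv.Perm.sign ρ : ℤ) : K) *
            ((Equiv.Perm.sign π : ℤ) : K))
          = ((Equiv.Perm.sign ρ : ℤ) : K) * (((Equiv.Perm.sign π : ℤ) : K) *
            ((Equiv.Perm.sign π : ℤ) : K)) := by ring
        _ = ((Equiv.Perm.sign ρ : ℤ) : K) := by rw [hsq, mul_one]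
    rw [h1, h2, mul_comm]
  rw [Finset.sum_congr rfl (fun π _ => inner π), Finset.sum_const, Finset.card_univ,
    Fintype.card_perm, Fintype.card_fin, nsmul_eq_mul]

lemma uOf_inl {N k : ℕ} (d : Fin k → Fin N × Fin N) (t : Fin k) :
    uOf d (finSumFinEquiv (Sum.inl t)) = Sum.inl (d t).1 := by
  rw [uOf, uFun, Function.comp_apply, Equiv.symm_apply_apply]
  rfl

lemma uOf_inr {N k : ℕ} (d : Fin k → Fin N × Fin N) (t : Fin k) :
    uOf d (finSumFinEquiv (Sum.inr t)) = Sum.inr (d t).2 := by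
  rw [uOf, uFun, Function.comp_apply, Equiv.symm_apply_apply]
  rfl

end GrAux

/-- Let `f = Σ_{i,j} M_{ij} a_i a_j*` be the bilinear form in the Grassmann generators
`a_1,…,a_N, a_1*,…,a_N*` (indexed by `Fin N ⊕ Fin N`) associated with an `N × N` matrix
`M` over a field of characteristic zero.  Expand `exp f` in a monomial basis `b` indexed
by finite sets of generators, where each basis vector is a product of the distinct
generators of the corresponding set (hypothesis `hb`), and where the basis vector at the
set `{a_{i_1},…,a_{i_n}, a_{j_1}*,…,a_{j_n}*}` is the interleaved monomial
`a_{i_1} a_{j_1}* ⋯ a_{i_n} a_{j_n}*` (hypothesis `hS`), for `i_1 < ⋯ < i_n` and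
`j_1 < ⋯ < j_n`.  Then the coefficient of this monomial equals the minor of `M` with
rows `i_1,…,i_n` and columns `j_1,…,j_n`. -/
theorem exp_coefficient_eq_minor (K : Type) [Field K] [CharZero K] (N : ℕ)
    (M : Matrix (Fin N) (Fin N) K)
    (b : Module.Basis (Finset (Fin N ⊕ Fin N)) K (Gr K (Fin N ⊕ Fin N)))
    (hb : ∀ s : Finset (Fin N ⊕ Fin N), ∃ l : List (Fin N ⊕ Fin N),
        l.Nodup ∧ l.toFinset = s ∧ b s = (l.map (gen K (Fin N ⊕ Fin N))).prod)
    (n : ℕ) (row col : Fin n → Fin N) (hrow : StrictMono row) (hcol : StrictMono col)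
    (hS : b (Finset.univ.image (Sum.inl ∘ row) ∪ Finset.univ.image (Sum.inr ∘ col)) =
        ((List.finRange n).map fun k =>
          gen K (Fin N ⊕ Fin N) (Sum.inl (row k)) *
            gen K (Fin N ⊕ Fin N) (Sum.inr (col k))).prod) :
    b.repr
        (gexp K (Fin N ⊕ Fin N) (2 * N + 1)
          (∑ i : Fin N, ∑ j : Fin N,
            M i j • (gen K (Fin N ⊕ Fin N) (Sum.inl i) * gen K (Fin N ⊕ Fin N) (Sum.inr j))))
        (Finset.univ.image (Sum.inl ∘ row) ∪ Finset.univ.image (Sum.inr ∘ col)) =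
      (M.submatrix row col).det := by
  classical
  set S : Finset (Fin N ⊕ Fin N) :=
    Finset.univ.image (Sum.inl ∘ row) ∪ Finset.univ.image (Sum.inr ∘ col) with hSdef
  set φ : Gr K (Fin N ⊕ Fin N) →ₗ[K] K :=
    (Finsupp.lapply S).comp b.repr.toLinearMap with hphidef
  have hφ : ∀ x, φ x = b.repr x S := fun _ => rfl
  have hrowinj : Function.Injective row := hrow.injective
  have hcolinj : Function.Injective col := hcol.injective
  have hn : n ≤ N := by simpa using Fintype.card_le_of_injective row hrowinj
  have hScard : S.card = n + n := by
    rw [hSdef, Finset.card_union_of_disjoint, Finset.card_image_of_injective _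
      (Sum.inl_injective.comp hrowinj), Finset.card_image_of_injective _
      (Sum.inr_injective.comp hcolinj), Finset.card_univ, Fintype.card_fin]
    · rw [Finset.disjoint_left]
      rintro x hx hx'
      obtain ⟨t, _, rfl⟩ := Finset.mem_image.mp hx
      obtain ⟨t', _, ht'⟩ := Finset.mem_image.mp hx'
      exact absurd ht' (by simp)
  -- the coefficient of any bad tuple vanishes
  have key0 : ∀ (k : ℕ) (d : Fin k → Fin N × Fin N),
      ¬(Function.Injective (GrAux.uOf d) ∧ Finset.univ.image (GrAux.uOf d) = S) →
      φ (GrAux.Gfun K d) = 0 := by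
    intro k d hnot
    by_cases hinj : Function.Injective (GrAux.uOf d)
    · have hne : Finset.univ.image (GrAux.uOf d) ≠ S := fun h => hnot ⟨hinj, h⟩
      obtain ⟨c, hc⟩ := GrAux.Gfun_eq_c K N k
      obtain ⟨l, hnd, htf, hbl⟩ := hb (Finset.univ.image (GrAux.uOf d))
      have hlen : l.length = k + k := by
        rw [← List.toFinset_card_of_nodup hnd, htf, Finset.card_image_of_injective _ hinj,
          Finset.card_univ, Fintype.card_fin]
      have hget : Function.Injective fun i : Fin (k + k) => l.get (Fin.cast hlen.symm i) :=
        (List.nodup_iff_injective_get.mp hnd).comp (Fin.cast_injective _)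
      have hrange : Set.range (GrAux.uOf d)
          = Set.range (fun i : Fin (k + k) => l.get (Fin.cast hlen.symm i)) := by
        ext x
        constructor
        · rintro ⟨i, rfl⟩
          have hx : GrAux.uOf d i ∈ l := by
            rw [← List.mem_toFinset, htf]
            exact Finset.mem_image_of_mem _ (Finset.mem_univ i)
          obtain ⟨j, hj⟩ := List.mem_iff_get.mp hx
          refine ⟨Fin.cast hlen j, ?_⟩
          rw [← hj]
          congr 1
        · rintro ⟨i, rfl⟩
          have hx : l.get (Fin.cast hlen.symm i) ∈ l.toFinset :=
            List.mem_toFinset.mpr (l.get_mem _)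
          rw [htf] at hx
          obtain ⟨j, _, hj⟩ := Finset.mem_image.mp hx
          exact ⟨j, hj⟩
      obtain ⟨σ, hσ⟩ := GrAux.exists_perm_comp hinj hget hrange
      have hcompσ : (fun i => GrAux.genv K (GrAux.uOf d i))
          = (fun i : Fin (k + k) => GrAux.genv K (l.get (Fin.cast hlen.symm i))) ∘ σ := by
        funext i
        exact congrArg (GrAux.genv K) (congrFun hσ i)
      have hbim : ExteriorAlgebra.ιMulti K (k + k)
          (fun i : Fin (k + k) => GrAux.genv K (l.get (Fin.cast hlen.symm i)))
          = b (Finset.univ.image (GrAux.uOf d)) := by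
        have h1 : ExteriorAlgebra.ιMulti K (k + k)
            ((fun j => GrAux.genv K (l.get j)) ∘ Fin.cast hlen.symm)
            = ExteriorAlgebra.ιMulti K l.length (fun j => GrAux.genv K (l.get j)) :=
          GrAux.ιMulti_cast hlen.symm _
        rw [show (fun i : Fin (k + k) => GrAux.genv K (l.get (Fin.cast hlen.symm i)))
          = ((fun j => GrAux.genv K (l.get j)) ∘ Fin.cast hlen.symm) from rfl, h1,
          ← GrAux.list_gen_prod, ← hbl]
      have hrepr : φ (b (Finset.univ.image (GrAux.uOf d))) = 0 := by
        rw [hφ, Module.Basis.repr_self, Finsupp.single_eq_of_ne hne.symm]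
      rw [hc d, hcompσ, AlternatingMap.map_perm, hbim, Units.smul_def, map_smul, map_zsmul,
        hrepr, smul_zero, smul_zero]
    · rw [GrAux.Gfun_zero_of_not_inj d hinj, map_zero]
  have hkn : ∀ (k : ℕ) (d : Fin k → Fin N × Fin N), Function.Injective (GrAux.uOf d) →
      Finset.univ.image (GrAux.uOf d) = S → k = n := by
    intro k d hinj him
    have h1 : (Finset.univ.image (GrAux.uOf d)).card = k + k := by
      rw [Finset.card_image_of_injective _ hinj, Finset.card_univ, Fintype.card_fin]
    rw [him, hScard] at h1
    omega
  set Φ : Equiv.Perm (Fin n) × Equiv.Perm (Fin n) → (Fin n → Fin N × Fin N) :=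
    fun q => fun t => (row (q.1 t), col (q.2 t)) with hΦdef
  have hbase : b S = GrAux.Gfun K (Φ (1, 1)) := by
    rw [hS, GrAux.Gfun, ← List.ofFn_eq_map]
    rfl
  have hone : φ (b S) = 1 := by
    rw [hφ, Module.Basis.repr_self, Finsupp.single_eq_same]
  have hval : ∀ π τ : Equiv.Perm (Fin n), φ (GrAux.Gfun K (Φ (π, τ)))
      = ((Equiv.Perm.sign π : ℤ) : K) * ((Equiv.Perm.sign τ : ℤ) : K) := by
    intro π τ
    obtain ⟨c, hc⟩ := GrAux.Gfun_eq_c K N n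
    set σc : Equiv.Perm (Fin (n + n)) := finSumFinEquiv.permCongr (Equiv.sumCongr π τ)
      with hσcdef
    have hcomp : (fun i => GrAux.genv K (GrAux.uOf (Φ (π, τ)) i))
        = (fun i => GrAux.genv K (GrAux.uOf (Φ (1, 1)) i)) ∘ σc := by
      funext i
      obtain ⟨s, rfl⟩ := finSumFinEquiv.surjective i
      show GrAux.genv K (GrAux.uOf (Φ (π, τ)) (finSumFinEquiv s))
        = GrAux.genv K (GrAux.uOf (Φ (1, 1)) (σc (finSumFinEquiv s)))
      have hσc : σc (finSumFinEquiv s) = finSumFinEquiv ((Equiv.sumCongr π τ) s) := by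
        rw [hσcdef, Equiv.permCongr_apply, Equiv.symm_apply_apply]
      rw [hσc]
      cases s with
      | inl t =>
        rw [GrAux.uOf_inl, show (Equiv.sumCongr π τ) (Sum.inl t) = Sum.inl (π t) from rfl,
          GrAux.uOf_inl]
        simp [hΦdef, Equiv.Perm.one_apply]
      | inr t =>
        rw [GrAux.uOf_inr, show (Equiv.sumCongr π τ) (Sum.inr t) = Sum.inr (τ t) from rfl,
          GrAux.uOf_inr]
        simp [hΦdef, Equiv.Perm.one_apply]
    have hsign : Equiv.Perm.sign σc = Equiv.Perm.sign π * Equiv.Perm.sign τ := by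
      rw [hσcdef, Equiv.Perm.sign_permCongr, Equiv.Perm.sign_sumCongr]
    have h2 : c • φ (ExteriorAlgebra.ιMulti K (n + n)
        (fun i => GrAux.genv K (GrAux.uOf (Φ (1, 1)) i))) = 1 := by
      rw [← map_smul, ← hc (Φ (1, 1)), ← hbase, hone]
    calc φ (GrAux.Gfun K (Φ (π, τ)))
        = ((Equiv.Perm.sign σc : ℤ)) • (c • φ (ExteriorAlgebra.ιMulti K (n + n)
            (fun i => GrAux.genv K (GrAux.uOf (Φ (1, 1)) i)))) := by
          rw [hc (Φ (π, τ)), hcomp, AlternatingMap.map_perm, Units.smul_def, map_smul,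
            map_zsmul, smul_comm]
      _ = ((Equiv.Perm.sign σc : ℤ)) • (1 : K) := by rw [h2]
      _ = ((Equiv.Perm.sign π : ℤ) : K) * ((Equiv.Perm.sign τ : ℤ) : K) := by
          rw [zsmul_eq_mul, mul_one, hsign, Units.val_mul, Int.cast_mul]
  have hform : ∀ d : Fin n → Fin N × Fin N, Function.Injective (GrAux.uOf d) →
      Finset.univ.image (GrAux.uOf d) = S → ∃ q, d = Φ q := by
    intro d hinj him
    have hd1 : Function.Injective fun t => (d t).1 := fun t t' h =>
      GrAux.uFun_inj_left hinj (a₁ := t) (a₂ := t') (congrArg Sum.inl h)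
    have hd2 : Function.Injective fun t => (d t).2 := fun t t' h =>
      GrAux.uFun_inj_right hinj (a₁ := t) (a₂ := t') (congrArg Sum.inr h)
    have himg : Finset.univ.image (GrAux.uOf d)
        = Finset.univ.image (fun t => Sum.inl ((d t).1))
          ∪ Finset.univ.image (fun t => Sum.inr ((d t).2)) := GrAux.image_uFun _ _
    rw [himg, hSdef] at him
    have hrows : Set.range (fun t => (d t).1) = Set.range row := by
      ext x
      have hx := Finset.ext_iff.mp him (Sum.inl x)
      simp only [Finset.mem_union, Finset.mem_image, Finset.mem_univ, true_and,
        Function.comp_apply, Sum.inl.injEq, reduceCtorEq, exists_false, or_false,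
        false_or] at hx
      simpa [Set.mem_range] using hx
    have hcols : Set.range (fun t => (d t).2) = Set.range col := by
      ext x
      have hx := Finset.ext_iff.mp him (Sum.inr x)
      simp only [Finset.mem_union, Finset.mem_image, Finset.mem_univ, true_and,
        Function.comp_apply, Sum.inr.injEq, reduceCtorEq, exists_false, or_false,
        false_or] at hx
      simpa [Set.mem_range] using hx
    obtain ⟨π, hπ⟩ := GrAux.exists_perm_comp hd1 hrowinj hrows
    obtain ⟨τ, hτ⟩ := GrAux.exists_perm_comp hd2 hcolinj hcols
    exact ⟨(π, τ), funext fun t => Prod.ext (congrFun hπ t) (congrFun hτ t)⟩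
  have hΦinj : Function.Injective Φ := by
    intro q q' h
    have h1 : q.1 = q'.1 := Equiv.ext fun t => hrowinj (congrArg Prod.fst (congrFun h t))
    have h2 : q.2 = q'.2 := Equiv.ext fun t => hcolinj (congrArg Prod.snd (congrFun h t))
    exact Prod.ext h1 h2
  have hpowk : ∀ k : ℕ, k ≠ n →
      φ ((∑ i : Fin N, ∑ j : Fin N, M i j • (gen K (Fin N ⊕ Fin N) (Sum.inl i) *
        gen K (Fin N ⊕ Fin N) (Sum.inr j))) ^ k) = 0 := by
    intro k hk
    rw [GrAux.pow_expand, map_sum]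
    refine Finset.sum_eq_zero fun d _ => ?_
    rw [map_smul, key0 k d ?_, smul_zero]
    rintro ⟨hinj, him⟩
    exact hk (hkn k d hinj him)
  have hpown : φ ((∑ i : Fin N, ∑ j : Fin N, M i j • (gen K (Fin N ⊕ Fin N) (Sum.inl i) *
      gen K (Fin N ⊕ Fin N) (Sum.inr j))) ^ n)
      = (n.factorial : K) * (M.submatrix row col).det := by
    rw [GrAux.pow_expand, map_sum]
    simp only [map_smul, smul_eq_mul]
    have hz : ∀ d ∈ (Finset.univ : Finset (Fin n → Fin N × Fin N)),
        d ∉ Finset.univ.image Φ →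
        (∏ t, M (d t).1 (d t).2) * φ (GrAux.Gfun K d) = 0 := by
      intro d _ hd
      rw [key0 n d ?_, mul_zero]
      rintro ⟨hinj, him⟩
      obtain ⟨q, rfl⟩ := hform d hinj him
      exact hd (Finset.mem_image_of_mem Φ (Finset.mem_univ q))
    rw [← Finset.sum_subset (Finset.subset_univ (Finset.univ.image Φ)) hz,
      Finset.sum_image (fun q _ q' _ h => hΦinj h)]
    have hterm : ∀ q : Equiv.Perm (Fin n) × Equiv.Perm (Fin n),
        (∏ t, M ((Φ q) t).1 ((Φ q) t).2) * φ (GrAux.Gfun K (Φ q))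
          = (∏ t, M (row (q.1 t)) (col (q.2 t))) *
            (((Equiv.Perm.sign q.1 : ℤ) : K) * ((Equiv.Perm.sign q.2 : ℤ) : K)) := by
      intro q
      rw [show Φ q = Φ (q.1, q.2) from rfl, hval q.1 q.2]
    rw [Finset.sum_congr rfl fun q _ => hterm q]
    exact GrAux.det_sum_perm M row col
  show φ (gexp K (Fin N ⊕ Fin N) (2 * N + 1)
    (∑ i : Fin N, ∑ j : Fin N, M i j • (gen K (Fin N ⊕ Fin N) (Sum.inl i) *
      gen K (Fin N ⊕ Fin N) (Sum.inr j)))) = (M.submatrix row col).det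
  rw [gexp, map_sum]
  simp only [map_smul, smul_eq_mul]
  rw [Finset.sum_eq_single n]
  · rw [hpown, ← mul_assoc, inv_mul_cancel₀ (Nat.cast_ne_zero.mpr n.factorial_ne_zero),
      one_mul]
  · intro k _ hk
    rw [hpowk k hk, mul_zero]
  · intro hcon
    exact absurd (Finset.mem_range.mpr (by omega)) hcon
end
end
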